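/- Let H=(J,F) be a hereditary set system, let there be n agents, let agent i have nonnegative item values v_{i,j} with induced valuation v_i, and let μ_1, ..., μ_n be positive reals. Then there exist pairwise disjoint subsets S_1, ..., S_n of J such that for every agent i with μ_i ≤ MMS(i), v_i(S_i) ≥ (11/30)·μ_i. -/

import Mathlib

open Finset

/-- The induced valuation of a set system `F` with item values `v`:
`hsVal F v S` is the maximum of `∑ j ∈ T, v j` over feasible `T ⊆ S`
(with the empty set always a candidate, as `∅ ∈ F` for hereditary systems). -/
noncomputable def hsVal {ι : Type*} (F : Finset ι → Prop) (v : ι → ℝ) (S : Finset ι) : ℝ :=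
  letI := Classical.decEq ι
  letI := Classical.decPred F
  (insert (∅ : Finset ι) (S.powerset.filter F)).sup' (Finset.insert_nonempty _ _)
    fun T => ∑ j ∈ T, v j

/-- The maximin share of an agent with valuation induced by `F` and `v`, for `n` agents:
the maximum over partitions of the items into `n` parts (fibers of `π : ι → Fin n`)
of the minimum value of a part. -/
noncomputable def hsMMS {ι : Type*} [Fintype ι] (F : Finset ι → Prop) (v : ι → ℝ) (n : ℕ) : ℝ :=
  ⨆ π : ι → Fin n, ⨅ k : Fin n, hsVal F v (Finset.univ.filter fun j => π j = k)

namespace FairDivW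


noncomputable def W (t : ℝ) : ℝ :=
  if t ≤ 0 then 0
  else if t ≤ 1/10 then 15*t/7
  else if t ≤ 7/60 then 3/14
  else if t < 1/6 then 15*t/7 - 1/28
  else if t ≤ 11/60 then 9/28
  else if t ≤ 4/15 then 15*t/7 - 1/14
  else if t < 11/30 then 1/2
  else 1

lemma W_nonneg (t : ℝ) : 0 ≤ W t := by unfold W; split_ifs <;> norm_num <;> linarith
lemma W_le_one (t : ℝ) : W t ≤ 1 := by unfold W; split_ifs <;> norm_num <;> linarith
lemma W_le_half {t : ℝ} (h : t < 11/30) : W t ≤ 1/2 := by unfold W; split_ifs <;> norm_num <;> linarith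
lemma W_le_lin {t : ℝ} (h0 : 0 ≤ t) (h : t < 11/30) : W t ≤ 15*t/7 := by unfold W; split_ifs <;> norm_num <;> linarith
lemma W_le_314 {t : ℝ} (h : t ≤ 7/60) : W t ≤ 3/14 := by unfold W; split_ifs <;> norm_num <;> linarith
lemma W_le_928 {t : ℝ} (h : t ≤ 11/60) : W t ≤ 9/28 := by unfold W; split_ifs <;> norm_num <;> linarith
lemma W_le_lin1 {t : ℝ} (h1 : 7/60 < t) (h2 : t < 11/30) : W t ≤ 15*t/7 - 1/28 := by
  unfold W; split_ifs <;> norm_num <;> linarith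
lemma W_le_lin2 {t : ℝ} (h1 : 11/60 < t) (h2 : t < 11/30) : W t ≤ 15*t/7 - 1/14 := by
  unfold W; split_ifs <;> norm_num <;> linarith
lemma W_le_quarter {t : ℝ} (h : t < 2/15) : W t ≤ 1/4 := by unfold W; split_ifs <;> norm_num <;> linarith
lemma W_ge_lin {t : ℝ} (h : t ≤ 1/10) : 15*t/7 ≤ W t := by unfold W; split_ifs <;> norm_num <;> linarith
lemma W_ge_lin1 {t : ℝ} (h : t ≤ 1/6) : 15*t/7 - 1/28 ≤ W t := by unfold W; split_ifs <;> norm_num <;> linarith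
lemma W_ge_lin2 {t : ℝ} (h : t ≤ 4/15) : 15*t/7 - 1/14 ≤ W t := by unfold W; split_ifs <;> norm_num <;> linarith
lemma W_ge_928 {t : ℝ} (h : 1/6 < t) : 9/28 ≤ W t := by unfold W; split_ifs <;> norm_num <;> linarith
lemma W_ge_314 {t : ℝ} (h : 1/10 < t) : 3/14 ≤ W t := by unfold W; split_ifs <;> norm_num <;> linarith
lemma W_ge_half {t : ℝ} (h : 4/15 < t) : 1/2 ≤ W t := by unfold W; split_ifs <;> norm_num <;> linarith
lemma W_one {t : ℝ} (h : 11/30 ≤ t) : W t = 1 := by unfold W; split_ifs <;> norm_num <;> linarith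

variable {β : Type*} [DecidableEq β]

/-- helper: sum of W over a set where each element is bounded below by a linear expr minus constant -/
lemma sum_W_ge (s : Finset β) (γ : β → ℝ) (c : ℝ)
    (h : ∀ j ∈ s, 15*γ j/7 - c ≤ W (γ j)) :
    15*(∑ j ∈ s, γ j)/7 - s.card * c ≤ ∑ j ∈ s, W (γ j) := by
  have := Finset.sum_le_sum h
  have e : ∑ j ∈ s, (15*γ j/7 - c) = 15*(∑ j ∈ s, γ j)/7 - s.card * c := by
    rw [Finset.sum_sub_distrib, Finset.sum_const, ← Finset.sum_div, ← Finset.mul_sum]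
    simp [nsmul_eq_mul]
  linarith [this, e.symm.le, e.le]

lemma sum_W_const_ge (s : Finset β) (γ : β → ℝ) (c : ℝ)
    (h : ∀ j ∈ s, c ≤ W (γ j)) : s.card * c ≤ ∑ j ∈ s, W (γ j) := by
  have := Finset.card_nsmul_le_sum s _ c h
  simpa [nsmul_eq_mul] using this

/-- K1s: family of values in [0, 4/15] with total ≥ 4/15 has W-sum ≥ 1/2. -/
lemma K1s (s : Finset β) (γ : β → ℝ)
    (h0 : ∀ j ∈ s, 0 ≤ γ j) (h415 : ∀ j ∈ s, γ j ≤ 4/15)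
    (hsum : 4/15 ≤ ∑ j ∈ s, γ j) :
    1/2 ≤ ∑ j ∈ s, W (γ j) := by
  classical
  set A := s.filter (fun j => 1/6 < γ j) with hAdef
  set s' := s \ A with hs'def
  set B := s'.filter (fun j => 1/10 < γ j) with hBdef
  set C := s' \ B with hCdef
  have hAsub : A ⊆ s := filter_subset _ _
  have hs'sub : s' ⊆ s := sdiff_subset
  have hBsub : B ⊆ s' := filter_subset _ _
  have hCsub : C ⊆ s' := sdiff_subset
  have hBs : B ⊆ s := hBsub.trans hs'sub
  have hCs : C ⊆ s := hCsub.trans hs'sub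
  -- sum decomposition
  have hsplit1 : ∀ f : β → ℝ, ∑ j ∈ s', f j + ∑ j ∈ A, f j = ∑ j ∈ s, f j := by
    intro f; exact Finset.sum_sdiff hAsub
  have hsplit2 : ∀ f : β → ℝ, ∑ j ∈ C, f j + ∑ j ∈ B, f j = ∑ j ∈ s', f j := by
    intro f; exact Finset.sum_sdiff hBsub
  -- basic facts on classes
  have hAmem : ∀ j ∈ A, 1/6 < γ j ∧ γ j ≤ 4/15 := by
    intro j hj; exact ⟨(mem_filter.mp hj).2, h415 j (hAsub hj)⟩
  have hBmem : ∀ j ∈ B, 1/10 < γ j ∧ γ j ≤ 1/6 := by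
    intro j hj
    have hj' : j ∈ s' := hBsub hj
    have h1 : 1/10 < γ j := (mem_filter.mp hj).2
    have h2 : ¬ (1/6 < γ j) := by
      have := (Finset.mem_sdiff.mp hj').2
      intro hc; exact this (mem_filter.mpr ⟨hs'sub hj', hc⟩)
    exact ⟨h1, not_lt.mp h2⟩
  have hCmem : ∀ j ∈ C, 0 ≤ γ j ∧ γ j ≤ 1/10 := by
    intro j hj
    have hj' : j ∈ s' := hCsub hj
    have h2 : ¬ (1/6 < γ j) := by
      have := (Finset.mem_sdiff.mp hj').2
      intro hc; exact this (mem_filter.mpr ⟨hs'sub hj', hc⟩)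
    have h1 : ¬ (1/10 < γ j) := by
      have := (Finset.mem_sdiff.mp hj).2
      intro hc; exact this (mem_filter.mpr ⟨hj', hc⟩)
    exact ⟨h0 j (hCs hj), not_lt.mp h1⟩
  -- C sum bounds
  have hCW : 15*(∑ j ∈ C, γ j)/7 ≤ ∑ j ∈ C, W (γ j) := by
    have := sum_W_ge C γ 0 (fun j hj => by
      have := W_ge_lin (t := γ j) (le_trans (hCmem j hj).2 (by norm_num))
      linarith)
    simpa using this
  have hCγ0 : 0 ≤ ∑ j ∈ C, γ j := Finset.sum_nonneg (fun j hj => (hCmem j hj).1)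
  have hBγ0 : 0 ≤ ∑ j ∈ B, γ j := Finset.sum_nonneg (fun j hj => le_of_lt (lt_trans (by norm_num) (hBmem j hj).1))
  have hAγ0 : 0 ≤ ∑ j ∈ A, γ j := Finset.sum_nonneg (fun j hj => le_of_lt (lt_trans (by norm_num) (hAmem j hj).1))
  have hAW0 : 0 ≤ ∑ j ∈ A, W (γ j) := Finset.sum_nonneg (fun j _ => W_nonneg _)
  have hBW0 : 0 ≤ ∑ j ∈ B, W (γ j) := Finset.sum_nonneg (fun j _ => W_nonneg _)
  have hCW0 : 0 ≤ ∑ j ∈ C, W (γ j) := Finset.sum_nonneg (fun j _ => W_nonneg _)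
  have htotal : ∑ j ∈ A, γ j + ∑ j ∈ B, γ j + ∑ j ∈ C, γ j = ∑ j ∈ s, γ j := by
    have := hsplit1 γ; have := hsplit2 γ; linarith [hsplit1 γ, hsplit2 γ]
  have htotalW : ∑ j ∈ s, W (γ j) = ∑ j ∈ A, W (γ j) + ∑ j ∈ B, W (γ j) + ∑ j ∈ C, W (γ j) := by
    linarith [hsplit1 (fun j => W (γ j)), hsplit2 (fun j => W (γ j))]
  rcases le_or_gt 2 A.card with hA2 | hA2
  · -- two elements > 1/6
    have := sum_W_const_ge A γ (9/28) (fun j hj => W_ge_928 (hAmem j hj).1)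
    have h2 : (2 : ℝ) ≤ (A.card : ℝ) := by exact_mod_cast hA2
    linarith [this, hBW0, hCW0]
  · interval_cases hc : A.card
    · -- A empty
      have hAe : A = ∅ := Finset.card_eq_zero.mp hc
      rcases le_or_gt 3 B.card with hB3 | hB3
      · have := sum_W_const_ge B γ (3/14) (fun j hj => W_ge_314 (hBmem j hj).1)
        have h3 : (3:ℝ) ≤ (B.card:ℝ) := by exact_mod_cast hB3
        linarith [this, hCW0, hAW0]
      · -- B.card ≤ 2
        have hBW : 15*(∑ j ∈ B, γ j)/7 - B.card * (1/28) ≤ ∑ j ∈ B, W (γ j) :=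
          sum_W_ge B γ (1/28) (fun j hj => W_ge_lin1 (hBmem j hj).2)
        have hBcard : (B.card : ℝ) ≤ 2 := by
          have : B.card ≤ 2 := by omega
          exact_mod_cast this
        have hAγe : ∑ j ∈ A, γ j = 0 := by rw [hAe]; simp
        have hAWe : ∑ j ∈ A, W (γ j) = 0 := by rw [hAe]; simp
        linarith [hBW, hCW, htotal, htotalW, hsum]
    · -- A.card = 1
      obtain ⟨x2, hx2⟩ := Finset.card_eq_one.mp hc
      have hx2A : x2 ∈ A := by rw [hx2]; exact mem_singleton_self _
      have hAWx : ∑ j ∈ A, W (γ j) = W (γ x2) := by rw [hx2]; simp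
      have hAγx : ∑ j ∈ A, γ j = γ x2 := by rw [hx2]; simp
      obtain ⟨hγ2a, hγ2b⟩ := hAmem x2 hx2A
      rcases le_or_gt 2 B.card with hB2 | hB2
      · have h1 := sum_W_const_ge B γ (3/14) (fun j hj => W_ge_314 (hBmem j hj).1)
        have h2 : (2:ℝ) ≤ (B.card:ℝ) := by exact_mod_cast hB2
        have h3 : 9/28 ≤ W (γ x2) := W_ge_928 hγ2a
        linarith [h1, hCW0]
      · interval_cases hbc : B.card
        · -- B empty
          have hBe : B = ∅ := Finset.card_eq_zero.mp hbc
          have hBγe : ∑ j ∈ B, γ j = 0 := by rw [hBe]; simp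
          have hBWe : ∑ j ∈ B, W (γ j) = 0 := by rw [hBe]; simp
          rcases le_or_gt (γ x2) (11/60) with hle | hgt
          · have h3 : 9/28 ≤ W (γ x2) := W_ge_928 hγ2a
            -- ∑C γ ≥ 4/15 - γ x2 ≥ 1/12
            linarith [hCW, htotal, htotalW, hsum]
          · have h3 : 15*(γ x2)/7 - 1/14 ≤ W (γ x2) := W_ge_lin2 hγ2b
            linarith [hCW, htotal, htotalW, hsum]
        · -- B.card = 1
          obtain ⟨x1, hx1⟩ := Finset.card_eq_one.mp hbc
          have hx1B : x1 ∈ B := by rw [hx1]; exact mem_singleton_self _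
          have hBWx : ∑ j ∈ B, W (γ j) = W (γ x1) := by rw [hx1]; simp
          have hBγx : ∑ j ∈ B, γ j = γ x1 := by rw [hx1]; simp
          obtain ⟨hγ1a, hγ1b⟩ := hBmem x1 hx1B
          rcases le_or_gt (γ x2) (11/60) with hle | hgt
          · have h3 : 9/28 ≤ W (γ x2) := W_ge_928 hγ2a
            have h4 : 15*(γ x1)/7 - 1/28 ≤ W (γ x1) := W_ge_lin1 hγ1b
            linarith [hCW, htotal, htotalW, hsum, hCγ0]
          · have h3 : 15*(γ x2)/7 - 1/14 ≤ W (γ x2) := W_ge_lin2 hγ2b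
            have h4 : 15*(γ x1)/7 - 1/28 ≤ W (γ x1) := W_ge_lin1 hγ1b
            linarith [hCW, htotal, htotalW, hsum, hCγ0]


/-- K1: any nonneg family with total > 19/30 has W-sum ≥ 1. -/
lemma K1 (s : Finset β) (γ : β → ℝ)
    (h0 : ∀ j ∈ s, 0 ≤ γ j) (hsum : 19/30 < ∑ j ∈ s, γ j) :
    1 ≤ ∑ j ∈ s, W (γ j) := by
  classical
  by_cases hbig : ∃ j ∈ s, 11/30 ≤ γ j
  · obtain ⟨j, hj, hjv⟩ := hbig
    have h1 : W (γ j) ≤ ∑ k ∈ s, W (γ k) :=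
      Finset.single_le_sum (fun k _ => W_nonneg (γ k)) hj
    rw [W_one hjv] at h1; exact h1
  · push_neg at hbig
    set H := s.filter (fun j => 4/15 < γ j) with hHdef
    have hHsub : H ⊆ s := filter_subset _ _
    rcases le_or_gt 2 H.card with hH2 | hH2
    · have h1 := sum_W_const_ge H γ (1/2) (fun j hj => W_ge_half (mem_filter.mp hj).2)
      have h2 : (2:ℝ) ≤ (H.card:ℝ) := by exact_mod_cast hH2
      have h3 : ∑ j ∈ H, W (γ j) ≤ ∑ j ∈ s, W (γ j) :=
        Finset.sum_le_sum_of_subset_of_nonneg hHsub (fun j _ _ => W_nonneg _)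
      linarith
    · interval_cases hc : H.card
      · -- no heavies: all ≤ 4/15
        have hHe : H = ∅ := Finset.card_eq_zero.mp hc
        have hall : ∀ j ∈ s, γ j ≤ 4/15 := by
          intro j hj
          by_contra hcon
          have : j ∈ H := mem_filter.mpr ⟨hj, lt_of_not_ge hcon⟩
          rw [hHe] at this; exact absurd this (Finset.notMem_empty _)
        set A := s.filter (fun j => 1/6 < γ j) with hAdef
        set s' := s \ A with hs'def
        set B := s'.filter (fun j => 1/10 < γ j) with hBdef
        set C := s' \ B with hCdef
        have hAsub : A ⊆ s := filter_subset _ _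
        have hs'sub : s' ⊆ s := sdiff_subset
        have hBsub : B ⊆ s' := filter_subset _ _
        have hCsub : C ⊆ s' := sdiff_subset
        have hsplit1 : ∀ f : β → ℝ, ∑ j ∈ s', f j + ∑ j ∈ A, f j = ∑ j ∈ s, f j := by
          intro f; exact Finset.sum_sdiff hAsub
        have hsplit2 : ∀ f : β → ℝ, ∑ j ∈ C, f j + ∑ j ∈ B, f j = ∑ j ∈ s', f j := by
          intro f; exact Finset.sum_sdiff hBsub
        have hAmem : ∀ j ∈ A, 1/6 < γ j ∧ γ j ≤ 4/15 := by
          intro j hj; exact ⟨(mem_filter.mp hj).2, hall j (hAsub hj)⟩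
        have hBmem : ∀ j ∈ B, 1/10 < γ j ∧ γ j ≤ 1/6 := by
          intro j hj
          have hj' : j ∈ s' := hBsub hj
          refine ⟨(mem_filter.mp hj).2, ?_⟩
          have h2 : ¬ (1/6 < γ j) := by
            have := (Finset.mem_sdiff.mp hj').2
            intro hc2; exact this (mem_filter.mpr ⟨hs'sub hj', hc2⟩)
          exact not_lt.mp h2
        have hCmem : ∀ j ∈ C, 0 ≤ γ j ∧ γ j ≤ 1/10 := by
          intro j hj
          have hj' : j ∈ s' := hCsub hj
          have h1 : ¬ (1/10 < γ j) := by
            have := (Finset.mem_sdiff.mp hj).2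
            intro hc1; exact this (mem_filter.mpr ⟨hj', hc1⟩)
          exact ⟨h0 j (hs'sub hj'), not_lt.mp h1⟩
        rcases le_or_gt 4 A.card with hA4 | hA4
        · have h1 := sum_W_const_ge A γ (9/28) (fun j hj => W_ge_928 (hAmem j hj).1)
          have h2 : (4:ℝ) ≤ (A.card:ℝ) := by exact_mod_cast hA4
          have h3 : ∑ j ∈ A, W (γ j) ≤ ∑ j ∈ s, W (γ j) :=
            Finset.sum_le_sum_of_subset_of_nonneg hAsub (fun j _ _ => W_nonneg _)
          linarith
        · rcases le_or_gt 5 B.card with hB5 | hB5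
          · have h1 := sum_W_const_ge B γ (3/14) (fun j hj => W_ge_314 (hBmem j hj).1)
            have h2 : (5:ℝ) ≤ (B.card:ℝ) := by exact_mod_cast hB5
            have h3 : ∑ j ∈ B, W (γ j) ≤ ∑ j ∈ s, W (γ j) :=
              Finset.sum_le_sum_of_subset_of_nonneg (hBsub.trans hs'sub) (fun j _ _ => W_nonneg _)
            linarith
          · have hAW : 15*(∑ j ∈ A, γ j)/7 - A.card * (1/14) ≤ ∑ j ∈ A, W (γ j) :=
              sum_W_ge A γ (1/14) (fun j hj => W_ge_lin2 (hAmem j hj).2)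
            have hBW : 15*(∑ j ∈ B, γ j)/7 - B.card * (1/28) ≤ ∑ j ∈ B, W (γ j) :=
              sum_W_ge B γ (1/28) (fun j hj => W_ge_lin1 (hBmem j hj).2)
            have hCW : 15*(∑ j ∈ C, γ j)/7 ≤ ∑ j ∈ C, W (γ j) := by
              have := sum_W_ge C γ 0 (fun j hj => by
                have := W_ge_lin (t := γ j) (hCmem j hj).2
                linarith)
              simpa using this
            have hAc : (A.card:ℝ) ≤ 3 := by
              have : A.card ≤ 3 := by omega
              exact_mod_cast this
            have hBc : (B.card:ℝ) ≤ 4 := by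
              have : B.card ≤ 4 := by omega
              exact_mod_cast this
            have e1 := hsplit1 γ; have e2 := hsplit2 γ
            have e3 := hsplit1 (fun j => W (γ j)); have e4 := hsplit2 (fun j => W (γ j))
            linarith
      · -- exactly one heavy
        obtain ⟨xh, hxh⟩ := Finset.card_eq_one.mp hc
        have hxhH : xh ∈ H := by rw [hxh]; exact mem_singleton_self _
        have hxhs : xh ∈ s := hHsub hxhH
        have hxv : 4/15 < γ xh := (mem_filter.mp hxhH).2
        have hrest : ∀ j ∈ s.erase xh, γ j ≤ 4/15 := by
          intro j hj
          by_contra hcon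
          have hjH : j ∈ H := mem_filter.mpr ⟨Finset.mem_of_mem_erase hj, lt_of_not_ge hcon⟩
          rw [hxh] at hjH
          have := Finset.mem_singleton.mp hjH
          exact (Finset.ne_of_mem_erase hj) this
        have hsumrest : 4/15 ≤ ∑ j ∈ s.erase xh, γ j := by
          have := Finset.add_sum_erase s γ hxhs
          have hxlt : γ xh < 11/30 := hbig xh hxhs
          linarith
        have hK := K1s (s.erase xh) γ (fun j hj => h0 j (Finset.mem_of_mem_erase hj)) hrest hsumrest
        have hWsplit := Finset.add_sum_erase s (fun j => W (γ j)) hxhs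
        have := W_ge_half hxv
        linarith

/-- K2: family where every co-singleton subfamily sums < 11/30 has W-sum ≤ 1. -/
lemma K2 (s : Finset β) (γ : β → ℝ)
    (h0 : ∀ j ∈ s, 0 ≤ γ j)
    (hyp : ∀ j ∈ s, ∑ k ∈ s.erase j, γ k < 11/30) :
    ∑ j ∈ s, W (γ j) ≤ 1 := by
  classical
  rcases s.eq_empty_or_nonempty with rfl | hne
  · simp
  rcases le_or_gt s.card 1 with h1 | h1
  · obtain ⟨x, hx⟩ := hne
    have : s = {x} := by
      have := Finset.card_le_one.mp h1
      apply Finset.eq_singleton_iff_unique_mem.mpr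
      exact ⟨hx, fun y hy => this y hy x hx⟩
    rw [this]; simpa using W_le_one (γ x)
  · -- n ≥ 2 : every element < 11/30
    have hlt : ∀ j ∈ s, γ j < 11/30 := by
      intro j hj
      obtain ⟨j', hj', hne'⟩ := Finset.exists_mem_ne h1 j
      have hjin : j ∈ s.erase j' := Finset.mem_erase.mpr ⟨fun h => hne' h.symm, hj⟩
      have := Finset.single_le_sum (f := γ) (fun k hk => h0 k (Finset.mem_of_mem_erase hk)) hjin
      exact lt_of_le_of_lt this (hyp j' hj')
    obtain ⟨jm, hjm, hmin⟩ := Finset.exists_min_image s γ hne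
    have hR := hyp jm hjm
    have hsplitW := Finset.add_sum_erase s (fun j => W (γ j)) hjm
    have hsplitγ := Finset.add_sum_erase s γ hjm
    rcases le_or_gt (γ jm) (7/60) with hm | hm
    · -- min small
      have h2 : ∑ j ∈ s.erase jm, W (γ j) ≤ 15*(∑ j ∈ s.erase jm, γ j)/7 := by
        have h3 : ∀ j ∈ s.erase jm, W (γ j) ≤ 15*(γ j)/7 := by
          intro j hj
          exact W_le_lin (h0 j (Finset.mem_of_mem_erase hj)) (hlt j (Finset.mem_of_mem_erase hj))
        have := Finset.sum_le_sum h3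
        calc ∑ j ∈ s.erase jm, W (γ j) ≤ ∑ j ∈ s.erase jm, 15*(γ j)/7 := this
          _ = 15*(∑ j ∈ s.erase jm, γ j)/7 := by rw [← Finset.sum_div, ← Finset.mul_sum]
      have h4 : W (γ jm) ≤ 3/14 := W_le_314 hm
      linarith
    · -- all elements > 7/60
      have hall : ∀ j ∈ s, 7/60 < γ j := fun j hj => lt_of_lt_of_le hm (hmin j hj)
      have hcard : (s.erase jm).card ≤ 3 := by
        by_contra hcon
        push_neg at hcon
        have h6 := Finset.card_nsmul_le_sum (s.erase jm) γ (7/60)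
          (fun j hj => le_of_lt (hall j (Finset.mem_of_mem_erase hj)))
        have h7 : (4:ℝ) ≤ ((s.erase jm).card : ℝ) := by exact_mod_cast hcon
        have h8 : ((s.erase jm).card : ℝ) * (7/60) ≤ ∑ j ∈ s.erase jm, γ j := by
          simpa [nsmul_eq_mul] using h6
        nlinarith
      have hcard1 : 1 ≤ (s.erase jm).card := by
        rw [Finset.card_erase_of_mem hjm]; omega
      interval_cases hec : (s.erase jm).card
      · -- n = 2
        obtain ⟨x, hx⟩ := Finset.card_eq_one.mp hec
        have hxs : x ∈ s := Finset.mem_of_mem_erase (hx ▸ Finset.mem_singleton_self x)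
        have e1 : ∑ j ∈ s.erase jm, W (γ j) = W (γ x) := by rw [hx]; simp
        have := W_le_half (hlt x hxs)
        have := W_le_half (hlt jm hjm)
        linarith
      · -- n = 3
        obtain ⟨x, y, hxy, hexy⟩ := Finset.card_eq_two.mp hec
        have hxs : x ∈ s := Finset.mem_of_mem_erase (hexy ▸ Finset.mem_insert_self x {y})
        have hys : y ∈ s := Finset.mem_of_mem_erase (hexy ▸ (Finset.mem_insert_of_mem (Finset.mem_singleton_self y)))
        have eW : ∑ j ∈ s.erase jm, W (γ j) = W (γ x) + W (γ y) := by
          rw [hexy]; rw [Finset.sum_insert (by simpa using hxy)]; simp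
        have eγ : ∑ j ∈ s.erase jm, γ j = γ x + γ y := by
          rw [hexy]; rw [Finset.sum_insert (by simpa using hxy)]; simp
        have hmx := hmin x hxs
        have hmy := hmin y hys
        have h7x := hall x hxs
        have h7y := hall y hys
        have hWm : W (γ jm) ≤ 15*(γ jm)/7 - 1/28 := W_le_lin1 hm (hlt jm hjm)
        rcases le_or_gt (γ x) (11/60) with hx1 | hx1
        · rcases le_or_gt (γ y) (11/60) with hy1 | hy1
          · have := W_le_928 hx1
            have := W_le_928 hy1
            have : W (γ jm) ≤ 9/28 := W_le_928 (le_trans (hmin x hxs) hx1)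
            linarith [W_le_928 hx1, W_le_928 hy1]
          · -- y big
            have hxsmall : γ x < 11/60 := by linarith [eγ, hR]
            have hWy : W (γ y) ≤ 15*(γ y)/7 - 1/14 := W_le_lin2 hy1 (hlt y hys)
            have hWx : W (γ x) ≤ 9/28 := W_le_928 hx1
            linarith [eγ, hR, hmx]
        · -- x big
          have hysmall : γ y < 11/60 := by linarith [eγ, hR]
          have hWx : W (γ x) ≤ 15*(γ x)/7 - 1/14 := W_le_lin2 hx1 (hlt x hxs)
          have hWy : W (γ y) ≤ 9/28 := W_le_928 (le_of_lt hysmall)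
          linarith [eγ, hR, hmy]
      · -- n = 4
        have hsmall : ∀ j ∈ s.erase jm, γ j < 2/15 := by
          intro j hj
          have h6 := Finset.card_nsmul_le_sum ((s.erase jm).erase j) γ (7/60)
            (fun k hk => le_of_lt (hall k (Finset.mem_of_mem_erase (Finset.mem_of_mem_erase hk))))
          have hcard2 : ((s.erase jm).erase j).card = 2 := by
            rw [Finset.card_erase_of_mem hj, hec]
          have h8 : (2:ℝ) * (7/60) ≤ ∑ k ∈ (s.erase jm).erase j, γ k := by
            rw [hcard2] at h6; simpa [nsmul_eq_mul] using h6
          have h9 := Finset.add_sum_erase (s.erase jm) γ hj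
          linarith [hR]
        have hW2 : ∑ j ∈ s.erase jm, W (γ j) ≤ 15*(∑ j ∈ s.erase jm, γ j)/7 - 3*(1/28) := by
          have h3 : ∀ j ∈ s.erase jm, W (γ j) ≤ 15*(γ j)/7 - 1/28 := by
            intro j hj
            exact W_le_lin1 (hall j (Finset.mem_of_mem_erase hj)) (hlt j (Finset.mem_of_mem_erase hj))
          have h4 := Finset.sum_le_sum h3
          have e : ∑ j ∈ s.erase jm, (15*(γ j)/7 - 1/28) = 15*(∑ j ∈ s.erase jm, γ j)/7 - 3*(1/28) := by
            rw [Finset.sum_sub_distrib, Finset.sum_const, ← Finset.sum_div, ← Finset.mul_sum, hec]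
            norm_num
          linarith
        have hWm : W (γ jm) ≤ 1/4 := by
          obtain ⟨j0, hj0⟩ : (s.erase jm).Nonempty := Finset.card_pos.mp (by omega)
          exact W_le_quarter (lt_of_le_of_lt (hmin j0 (Finset.mem_of_mem_erase hj0)) (hsmall j0 hj0))
        linarith



lemma W_zero : W 0 = 0 := by unfold W; norm_num

variable {ι : Type*} [DecidableEq ι]

/-- Core counting lemma: given disjoint parts each of (scaled) value ≥ 1 and fewer
disjoint "bundles" whose proper subsets all have value < 11/30, some part retains
value ≥ 11/30 outside all bundles. -/
lemma lemA (u : ι → ℝ) (hu : ∀ g, 0 ≤ u g) (P D : Finset (Finset ι))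
    (hPdisj : (P : Set (Finset ι)).Pairwise Disjoint)
    (hPsum : ∀ T ∈ P, 1 ≤ ∑ g ∈ T, u g)
    (hDdisj : (D : Set (Finset ι)).Pairwise Disjoint)
    (hDprop : ∀ B ∈ D, ∀ C ⊂ B, ∑ g ∈ C, u g < 11/30)
    (hcard : D.card < P.card) :
    ∃ T ∈ P, 11/30 ≤ ∑ g ∈ T \ D.sup id, u g := by
  classical
  by_contra hcon
  push_neg at hcon
  set γ : Finset ι → Finset ι → ℝ := fun B T => ∑ g ∈ B ∩ T, u g with hγdef
  -- Step 1: each part collects W-weight ≥ 1 from the bundles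
  have step1 : ∀ T ∈ P, 1 ≤ ∑ B ∈ D, W (γ B T) := by
    intro T hT
    apply K1
    · intro B _; exact Finset.sum_nonneg (fun g _ => hu g)
    · -- 19/30 < ∑_B γ B T
      have hsplit : ∑ g ∈ T ∩ D.sup id, u g + ∑ g ∈ T \ D.sup id, u g = ∑ g ∈ T, u g :=
        Finset.sum_inter_add_sum_sdiff T (D.sup id) u
      have hbi : T ∩ D.sup id = D.biUnion (fun B => B ∩ T) := by
        ext g
        simp only [Finset.mem_inter, Finset.mem_biUnion, Finset.mem_sup, id]
        tauto
      have hdisjfam : (D : Set (Finset ι)).PairwiseDisjoint (fun B => B ∩ T) := by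
        intro B hB B' hB' hne
        exact Finset.disjoint_of_subset_left Finset.inter_subset_left
          (Finset.disjoint_of_subset_right Finset.inter_subset_left (hDdisj hB hB' hne))
      have hsum2 : ∑ g ∈ T ∩ D.sup id, u g = ∑ B ∈ D, γ B T := by
        rw [hbi, Finset.sum_biUnion hdisjfam]
      have h1 := hPsum T hT
      have h2 := hcon T hT
      linarith
  -- Step 2: each bundle gives away W-weight ≤ 1
  have step2 : ∀ B ∈ D, ∑ T ∈ P, W (γ B T) ≤ 1 := by
    intro B hB
    set Pb := P.filter (fun T => (B ∩ T).Nonempty) with hPbdef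
    have hPbsub : Pb ⊆ P := filter_subset _ _
    have hzero : ∀ T ∈ P \ Pb, W (γ B T) = 0 := by
      intro T hT
      have h1 : ¬ (B ∩ T).Nonempty := by
        have := (Finset.mem_sdiff.mp hT).2
        intro hc; exact this (mem_filter.mpr ⟨(Finset.mem_sdiff.mp hT).1, hc⟩)
      have h2 : B ∩ T = ∅ := Finset.not_nonempty_iff_eq_empty.mp h1
      have : γ B T = 0 := by rw [hγdef]; simp [h2]
      rw [this, W_zero]
    have hsplit : ∑ T ∈ P, W (γ B T) = ∑ T ∈ Pb, W (γ B T) := by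
      rw [← Finset.sum_sdiff hPbsub]
      rw [Finset.sum_eq_zero hzero]; ring
    rw [hsplit]
    apply K2
    · intro T _; exact Finset.sum_nonneg (fun g _ => hu g)
    · -- co-singleton sums are proper subsets of B
      intro T hT
      have hTP : T ∈ P := hPbsub hT
      have hBTne : (B ∩ T).Nonempty := (mem_filter.mp hT).2
      set C := (Pb.erase T).biUnion (fun T' => B ∩ T') with hCdef
      have hdisjfam : ((Pb.erase T) : Set (Finset ι)).PairwiseDisjoint (fun T' => B ∩ T') := by
        intro T1 hT1 T2 hT2 hne
        have h1 : (T1 : Finset ι) ∈ P := hPbsub (Finset.mem_of_mem_erase (by exact_mod_cast hT1))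
        have h2 : (T2 : Finset ι) ∈ P := hPbsub (Finset.mem_of_mem_erase (by exact_mod_cast hT2))
        exact Finset.disjoint_of_subset_left Finset.inter_subset_right
          (Finset.disjoint_of_subset_right Finset.inter_subset_right (hPdisj h1 h2 hne))
      have hsumC : ∑ T' ∈ Pb.erase T, γ B T' = ∑ g ∈ C, u g := by
        rw [hCdef, Finset.sum_biUnion hdisjfam]
      rw [hsumC]
      apply hDprop B hB
      constructor
      · intro g hg
        obtain ⟨T', _, hgT'⟩ := Finset.mem_biUnion.mp hg
        exact (Finset.mem_inter.mp hgT').1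
      · intro hsub
        obtain ⟨x, hx⟩ := hBTne
        have hxB : x ∈ B := (Finset.mem_inter.mp hx).1
        have hxT : x ∈ T := (Finset.mem_inter.mp hx).2
        have hxC := hsub hxB
        obtain ⟨T', hT', hxT'⟩ := Finset.mem_biUnion.mp hxC
        have hT'P : T' ∈ P := hPbsub (Finset.mem_of_mem_erase hT')
        have hTne : T' ≠ T := Finset.ne_of_mem_erase hT'
        have hdis := hPdisj hT'P hTP hTne
        exact Finset.disjoint_left.mp hdis (Finset.mem_inter.mp hxT').2 hxT
  -- Step 3: double counting
  have hcount1 : (P.card : ℝ) ≤ ∑ T ∈ P, ∑ B ∈ D, W (γ B T) := by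
    have := Finset.card_nsmul_le_sum P (fun T => ∑ B ∈ D, W (γ B T)) 1 step1
    simpa [nsmul_eq_mul] using this
  have hcount2 : ∑ B ∈ D, ∑ T ∈ P, W (γ B T) ≤ (D.card : ℝ) := by
    have := Finset.sum_le_card_nsmul D (fun B => ∑ T ∈ P, W (γ B T)) 1 step2
    simpa [nsmul_eq_mul] using this
  rw [Finset.sum_comm] at hcount1
  have : (P.card : ℝ) ≤ (D.card : ℝ) := le_trans hcount1 hcount2
  have : P.card ≤ D.card := by exact_mod_cast this
  omega



variable {ι : Type*} [DecidableEq ι] {ag : Type*} [DecidableEq ag]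

/-- Sequential allocation: given each agent in `A` owns at least `A.card + D.card`
disjoint feasible parts of value ≥ μ, and bundles `D` with small proper subsets,
all agents can receive disjoint feasible bundles of value ≥ (11/30)μ avoiding `D`. -/
lemma phase2 (F : Finset ι → Prop) (hHer : ∀ S T : Finset ι, F S → T ⊆ S → F T)
    (v : ag → ι → ℝ) (hv : ∀ a g, 0 ≤ v a g) (μ : ag → ℝ) (hμ : ∀ a, 0 < μ a)
    (U : Finset ι) (P : ag → Finset (Finset ι)) :
    ∀ (N : ℕ) (A : Finset ag) (D : Finset (Finset ι)),
    A.card = N →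
    (∀ a ∈ A, ∀ T ∈ P a, F T ∧ T ⊆ U ∧ μ a ≤ ∑ g ∈ T, v a g) →
    (∀ a ∈ A, ((P a : Set (Finset ι))).Pairwise Disjoint) →
    (∀ a ∈ A, A.card + D.card ≤ (P a).card) →
    ((D : Set (Finset ι))).Pairwise Disjoint →
    (∀ B ∈ D, ∀ a ∈ A, ∀ C ⊂ B, ∑ g ∈ C, v a g < 11/30 * μ a) →
    ∃ S : ag → Finset ι,
      (∀ a ∈ A, F (S a) ∧ S a ⊆ U ∧ Disjoint (S a) (D.sup id) ∧
        11/30 * μ a ≤ ∑ g ∈ S a, v a g) ∧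
      (∀ a ∈ A, ∀ b ∈ A, a ≠ b → Disjoint (S a) (S b)) := by
  classical
  intro N
  induction N with
  | zero =>
    intro A D hcardA _ _ _ _ _
    have hA : A = ∅ := Finset.card_eq_zero.mp hcardA
    refine ⟨fun _ => ∅, ?_, ?_⟩
    · intro a ha; rw [hA] at ha; exact absurd ha (Finset.notMem_empty _)
    · intro a ha; rw [hA] at ha; exact absurd ha (Finset.notMem_empty _)
  | succ N ih =>
    intro A D hcardA hparts hPdisj hcard hDdisj hDprop
    have hAne : A.Nonempty := Finset.card_pos.mp (by omega)
    -- the candidate predicate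
    set Cand : ℕ → Prop := fun n => ∃ a ∈ A, ∃ C : Finset ι, C.card = n ∧ F C ∧ C ⊆ U ∧
      Disjoint C (D.sup id) ∧ 11/30 * μ a ≤ ∑ g ∈ C, v a g with hCanddef
    have hCne : ∃ n, Cand n := by
      obtain ⟨a₀, ha₀⟩ := hAne
      -- apply lemA with scaled values
      have hμ0 := hμ a₀
      obtain ⟨T, hTP, hTval⟩ := lemA (fun g => v a₀ g / μ a₀)
        (fun g => div_nonneg (hv a₀ g) (le_of_lt hμ0)) (P a₀) D (hPdisj a₀ ha₀)
        (by
          intro T hT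
          have h1 := (hparts a₀ ha₀ T hT).2.2
          rw [← Finset.sum_div]
          rw [le_div_iff₀ hμ0]; linarith)
        hDdisj
        (by
          intro B hB C hC
          have h1 := hDprop B hB a₀ ha₀ C hC
          rw [← Finset.sum_div]
          rw [div_lt_iff₀ hμ0]; linarith)
        (by have := hcard a₀ ha₀; omega)
      refine ⟨(T \ D.sup id).card, a₀, ha₀, T \ D.sup id, rfl, ?_, ?_, ?_, ?_⟩
      · exact hHer T _ (hparts a₀ ha₀ T hTP).1 sdiff_subset
      · exact sdiff_subset.trans (hparts a₀ ha₀ T hTP).2.1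
      · exact Finset.sdiff_disjoint
      · rw [← Finset.sum_div, le_div_iff₀ hμ0] at hTval; linarith
    -- minimal candidate
    have hfind := Nat.find_spec hCne
    obtain ⟨a', ha', C', hC'card, hC'F, hC'U, hC'disj, hC'val⟩ := hfind
    -- recurse
    set A' := A.erase a' with hA'def
    set D' := insert C' D with hD'def
    have hC'notinD : Disjoint C' (D.sup id) := hC'disj
    have hsupmono : D.sup id ⊆ D'.sup id := Finset.sup_mono (Finset.subset_insert _ _)
    have hC'subsup : C' ⊆ D'.sup id := by
      have h := Finset.le_sup (f := id) (Finset.mem_insert_self C' D)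
      exact h
    obtain ⟨S', hS'1, hS'2⟩ := ih A' D'
      (by rw [hA'def, Finset.card_erase_of_mem ha', hcardA]; rfl)
      (fun a ha => hparts a (Finset.mem_of_mem_erase ha))
      (fun a ha => hPdisj a (Finset.mem_of_mem_erase ha))
      (by
        intro a ha
        have h1 := hcard a (Finset.mem_of_mem_erase ha)
        have h2 : A'.card = A.card - 1 := by rw [hA'def, Finset.card_erase_of_mem ha']
        have h3 : D'.card ≤ D.card + 1 := Finset.card_insert_le _ _
        omega)
      (by
        rw [hD'def, Finset.coe_insert]
        apply Set.Pairwise.insert hDdisj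
        intro B hB hne
        have hBsub : B ⊆ D.sup id := by
          have := Finset.le_sup (f := id) hB
          simpa using this
        have hdisj : Disjoint C' B := Finset.disjoint_of_subset_right hBsub hC'disj
        exact ⟨hdisj, hdisj.symm⟩)
      (by
        intro B hB a ha C hC
        rcases Finset.mem_insert.mp hB with hBC' | hBD
        · -- B = C' : minimality
          rw [hBC'] at hC
          by_contra hcon
          push_neg at hcon
          have hCcand : Cand C.card := by
            refine ⟨a, Finset.mem_of_mem_erase ha, C, rfl, ?_, ?_, ?_, ?_⟩
            · exact hHer C' C hC'F hC.subset
            · exact hC.subset.trans hC'U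
            · exact Finset.disjoint_of_subset_left hC.subset hC'disj
            · exact hcon
          have := Nat.find_min hCne (m := C.card) (by
            rw [← hC'card]; exact Finset.card_lt_card hC)
          exact this hCcand
        · exact hDprop B hBD a (Finset.mem_of_mem_erase ha) C hC)
    -- assemble
    refine ⟨fun a => if a = a' then C' else S' a, ?_, ?_⟩
    · intro a ha
      by_cases haa : a = a'
      · simp only [if_pos haa]
        rw [haa]
        exact ⟨hC'F, hC'U, hC'disj, hC'val⟩
      · have haA' : a ∈ A' := Finset.mem_erase.mpr ⟨haa, ha⟩
        simp only [if_neg haa]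
        obtain ⟨h1, h2, h3, h4⟩ := hS'1 a haA'
        exact ⟨h1, h2, Finset.disjoint_of_subset_right hsupmono h3, h4⟩
    · intro a ha b hb hab
      by_cases haa : a = a'
      · have hbb : ¬ b = a' := fun h => hab (haa.trans h.symm)
        simp only [if_pos haa, if_neg hbb]
        have hbA' : b ∈ A' := Finset.mem_erase.mpr ⟨hbb, hb⟩
        have h3 := (hS'1 b hbA').2.2.1
        exact (Finset.disjoint_of_subset_left hC'subsup h3.symm)
      · by_cases hbb : b = a'
        · simp only [if_neg haa, if_pos hbb]
          have haA' : a ∈ A' := Finset.mem_erase.mpr ⟨haa, ha⟩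
          have h3 := (hS'1 a haA').2.2.1
          exact Finset.disjoint_of_subset_right hC'subsup h3
        · have haA' : a ∈ A' := Finset.mem_erase.mpr ⟨haa, ha⟩
          have hbA' : b ∈ A' := Finset.mem_erase.mpr ⟨hbb, hb⟩
          simp only [if_neg haa, if_neg hbb]
          exact hS'2 a haA' b hbA' hab



lemma hsVal_ge {ι : Type*} (F : Finset ι → Prop) (v : ι → ℝ) {S T : Finset ι}
    (hF : F T) (hsub : T ⊆ S) : ∑ j ∈ T, v j ≤ hsVal F v S := by
  classical
  unfold hsVal
  exact Finset.le_sup' (fun T => ∑ j ∈ T, v j)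
    (Finset.mem_insert_of_mem (Finset.mem_filter.mpr ⟨Finset.mem_powerset.mpr hsub, hF⟩))

lemma hsVal_attained {ι : Type*} (F : Finset ι → Prop) (v : ι → ℝ) {S : Finset ι} {μ : ℝ}
    (hμ : 0 < μ) (h : μ ≤ hsVal F v S) : ∃ T, F T ∧ T ⊆ S ∧ μ ≤ ∑ j ∈ T, v j := by
  classical
  unfold hsVal at h
  obtain ⟨T, hTmem, hTeq⟩ := Finset.exists_mem_eq_sup'
    (Finset.insert_nonempty (∅ : Finset ι) (S.powerset.filter (letI := Classical.decPred F; F)))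
    (fun T => ∑ j ∈ T, v j)
  rw [hTeq] at h
  rcases Finset.mem_insert.mp hTmem with rfl | hTf
  · simp at h; linarith
  · have h1 := Finset.mem_filter.mp hTf
    exact ⟨T, h1.2, Finset.mem_powerset.mp h1.1, h⟩

lemma hsMMS_attained {ι : Type*} [Fintype ι] (F : Finset ι → Prop) (v : ι → ℝ) {n : ℕ}
    (hn : 0 < n) {μ : ℝ} (h : μ ≤ hsMMS F v n) :
    ∃ π : ι → Fin n, ∀ k : Fin n, μ ≤ hsVal F v (Finset.univ.filter fun j => π j = k) := by
  classical
  haveI : Nonempty (Fin n) := ⟨⟨0, hn⟩⟩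
  haveI : Nonempty (ι → Fin n) := ⟨fun _ => ⟨0, hn⟩⟩
  obtain ⟨π, hπ⟩ := Finite.exists_max
    (fun π : ι → Fin n => ⨅ k : Fin n, hsVal F v (Finset.univ.filter fun j => π j = k))
  have h2 : hsMMS F v n ≤ ⨅ k : Fin n, hsVal F v (Finset.univ.filter fun j => π j = k) := by
    unfold hsMMS; exact ciSup_le hπ
  refine ⟨π, fun k => ?_⟩
  have h3 : (⨅ k : Fin n, hsVal F v (Finset.univ.filter fun j => π j = k)) ≤
      hsVal F v (Finset.univ.filter fun j => π j = k) :=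
    ciInf_le (Finite.bddBelow_range _) k
  linarith

end FairDivW

/-- Given positive reals `μ i`, there exist pairwise disjoint bundles such
that every agent whose `μ i` does not exceed its maximin share receives value at
least `(11/30) * μ i`. -/
theorem fair_division_with_estimates {ι : Type*} [Fintype ι] (F : Finset ι → Prop)
    (hHer : ∀ S T : Finset ι, F S → T ⊆ S → F T) (hEmpty : F ∅)
    (n : ℕ) (v : Fin n → ι → ℝ) (hv : ∀ i j, 0 ≤ v i j)
    (μ : Fin n → ℝ) (hμ : ∀ i, 0 < μ i) :
    ∃ S : Fin n → Finset ι,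
      (∀ i k : Fin n, i ≠ k → Disjoint (S i) (S k)) ∧
      ∀ i : Fin n, μ i ≤ hsMMS F (v i) n →
        (11 / 30 : ℝ) * μ i ≤ hsVal F (v i) (S i) := by
  classical
  set A : Finset (Fin n) := Finset.univ.filter (fun i => μ i ≤ hsMMS F (v i) n) with hAdef
  have hex2 : ∀ i : Fin n, ∃ P : Finset (Finset ι),
      (i ∈ A → ((∀ T ∈ P, F T ∧ T ⊆ (Finset.univ : Finset ι) ∧ μ i ≤ ∑ g ∈ T, v i g) ∧
        ((P : Set (Finset ι))).Pairwise Disjoint ∧ n ≤ P.card)) := by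
    intro i
    by_cases hi : i ∈ A
    · have hi' : μ i ≤ hsMMS F (v i) n := (Finset.mem_filter.mp hi).2
      have hn : 0 < n := i.pos
      obtain ⟨π, hπ⟩ := FairDivW.hsMMS_attained F (v i) hn hi'
      have hex3 : ∀ k : Fin n, ∃ T : Finset ι,
          F T ∧ T ⊆ (Finset.univ.filter fun j => π j = k) ∧ μ i ≤ ∑ g ∈ T, v i g :=
        fun k => FairDivW.hsVal_attained F (v i) (hμ i) (hπ k)
      choose T hTF hTsub hTval using hex3
      have hTdisj : ∀ k k' : Fin n, k ≠ k' → Disjoint (T k) (T k') := by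
        intro k k' hne
        apply Finset.disjoint_left.mpr
        intro g hg hg'
        have h1 := hTsub k hg
        have h2 := hTsub k' hg'
        have e1 := (Finset.mem_filter.mp h1).2
        have e2 := (Finset.mem_filter.mp h2).2
        exact hne (e1 ▸ e2 ▸ rfl)
      have hTne : ∀ k, (T k).Nonempty := by
        intro k
        rcases Finset.eq_empty_or_nonempty (T k) with he | hne
        · exfalso
          have := hTval k
          rw [he] at this
          simp at this
          linarith [hμ i]
        · exact hne
      have hTinj : Function.Injective T := by
        intro k k' he
        by_contra hne
        have hd := hTdisj k k' hne
        obtain ⟨g, hg⟩ := hTne k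
        exact Finset.disjoint_left.mp hd hg (he ▸ hg)
      refine ⟨Finset.univ.image T, fun _ => ⟨?_, ?_, ?_⟩⟩
      · intro T' hT'
        obtain ⟨k, _, rfl⟩ := Finset.mem_image.mp hT'
        exact ⟨hTF k, Finset.subset_univ _, hTval k⟩
      · intro X hX Y hY hne
        rw [Finset.coe_image] at hX hY
        obtain ⟨k, _, rfl⟩ := hX
        obtain ⟨k', _, rfl⟩ := hY
        exact hTdisj k k' (fun h => hne (by rw [h]))
      · rw [Finset.card_image_of_injective _ hTinj, Finset.card_univ, Fintype.card_fin]
    · exact ⟨∅, fun h => absurd h hi⟩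
  choose P hP using hex2
  have hAcard : A.card ≤ n := by
    calc A.card ≤ (Finset.univ : Finset (Fin n)).card := Finset.card_filter_le _ _
      _ = n := by rw [Finset.card_univ, Fintype.card_fin]
  obtain ⟨S₀, hS1, hS2⟩ := FairDivW.phase2 F hHer v hv μ hμ (Finset.univ) P A.card A ∅ rfl
    (fun a ha T hT => (hP a ha).1 T hT)
    (fun a ha => (hP a ha).2.1)
    (fun a ha => by
      have h1 := (hP a ha).2.2
      have h2 : (∅ : Finset (Finset ι)).card = 0 := Finset.card_empty
      omega)
    (by rw [Finset.coe_empty]; exact Set.pairwise_empty _)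
    (fun B hB => absurd hB (Finset.notMem_empty _))
  refine ⟨fun i => if i ∈ A then S₀ i else ∅, ?_, ?_⟩
  · intro i k hik
    by_cases hi : i ∈ A
    · by_cases hk : k ∈ A
      · simp only [if_pos hi, if_pos hk]
        exact hS2 i hi k hk hik
      · simp only [if_pos hi, if_neg hk]
        exact Finset.disjoint_empty_right _
    · simp only [if_neg hi]
      exact Finset.disjoint_empty_left _
  · intro i hmms
    have hiA : i ∈ A := Finset.mem_filter.mpr ⟨Finset.mem_univ _, hmms⟩
    simp only [if_pos hiA]
    obtain ⟨hF1, _, _, hval⟩ := hS1 i hiA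
    exact le_trans hval (FairDivW.hsVal_ge F (v i) hF1 (subset_refl _))
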